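/- For n ≥ 2, let f : ℝⁿ → ℝ be Lebesgue integrable, and let g(x) = Σᵢ₌₁^m aᵢ σᵢ(wᵢᵀx + bᵢ) be a one-hidden-layer network with measurable activations σᵢ : ℝ → ℝ. Then either ∫ |f − g| = ∞ or ∫ |f − g| = ∫ |f|. -/

import Mathlib

open MeasureTheory

/-- An integrable function a.e.-invariant under a nonzero translation is a.e. zero. -/
private lemma translate_ae_eq_zero {n : ℕ} (v : Fin n → ℝ) (hv : v ≠ 0)
    (h : (Fin n → ℝ) → ℝ) (hm : Measurable h)
    (hint : Integrable h (volume : Measure (Fin n → ℝ)))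
    (htr : ∀ᵐ x : Fin n → ℝ, h (x + v) = h x) :
    ∀ᵐ x : Fin n → ℝ, h x = 0 := by
  obtain ⟨j, hj⟩ : ∃ j, v j ≠ 0 := by
    by_contra hc; push_neg at hc; exact hv (funext hc)
  set s : (Fin n → ℝ) → ℝ := fun x => x j / v j with hs
  have hsm : Measurable s := (measurable_pi_apply j).div_const _
  set A : ℤ → Set (Fin n → ℝ) := fun k => s ⁻¹' Set.Ico (k : ℝ) (k + 1) with hA
  have hAm : ∀ k, MeasurableSet (A k) := fun k => hsm measurableSet_Ico
  have hsadd : ∀ x, s (x + v) = s x + 1 := fun x => by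
    simp only [hs, Pi.add_apply, add_div, div_self hj]
  have hmp : MeasurePreserving (fun x : Fin n → ℝ => x + v) volume volume :=
    measurePreserving_add_right volume v
  have hpre : ∀ k : ℤ, (fun x : Fin n → ℝ => x + v) ⁻¹' A (k + 1) = A k := by
    intro k
    ext x
    simp only [Set.mem_preimage, hA, Set.mem_Ico, hsadd]
    push_cast
    constructor <;> rintro ⟨h1, h2⟩ <;> constructor <;> linarith
  have key : ∀ k : ℤ, ∫⁻ x in A (k + 1), (‖h x‖₊ : ENNReal) ∂volume
      = ∫⁻ x in A k, (‖h x‖₊ : ENNReal) ∂volume := by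
    intro k
    rw [← hmp.setLIntegral_comp_preimage (hAm (k + 1)) hm.nnnorm.coe_nnreal_ennreal, hpre k]
    refine lintegral_congr_ae (ae_restrict_of_ae (htr.mono fun x hx => ?_))
    simp [hx]
  have keyall : ∀ k : ℤ, ∫⁻ x in A k, (‖h x‖₊ : ENNReal) ∂volume
      = ∫⁻ x in A 0, (‖h x‖₊ : ENNReal) ∂volume := by
    intro k
    induction k using Int.induction_on with
    | zero => rfl
    | succ i ih => rw [key i, ih]
    | pred i ih => rw [← ih, ← key (-i - 1)]; norm_num
  have hcover : (⋃ k : ℤ, A k) = Set.univ := by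
    ext x
    simp only [Set.mem_iUnion, Set.mem_univ, iff_true, hA, Set.mem_preimage, Set.mem_Ico]
    exact ⟨⌊s x⌋, Int.floor_le _, Int.lt_floor_add_one _⟩
  have hdisj : Pairwise (Function.onFun Disjoint A) := by
    intro k l hkl
    refine Set.disjoint_left.2 fun x hx hx' => hkl ?_
    simp only [hA, Set.mem_preimage, Set.mem_Ico] at hx hx'
    have h1 : (k : ℝ) < l + 1 := lt_of_le_of_lt hx.1 hx'.2
    have h2 : (l : ℝ) < k + 1 := lt_of_le_of_lt hx'.1 hx.2
    have h1' : k < l + 1 := by exact_mod_cast h1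
    have h2' : l < k + 1 := by exact_mod_cast h2
    omega
  have htot : ∫⁻ x, (‖h x‖₊ : ENNReal) ∂volume
      = ∑' k : ℤ, ∫⁻ x in A k, (‖h x‖₊ : ENNReal) ∂volume := by
    rw [← lintegral_iUnion hAm hdisj, hcover, Measure.restrict_univ]
  have hc0 : ∫⁻ x in A 0, (‖h x‖₊ : ENNReal) ∂volume = 0 := by
    by_contra hc
    have : ∫⁻ x, (‖h x‖₊ : ENNReal) ∂volume = ⊤ := by
      rw [htot]
      have : ∀ k : ℤ, ∫⁻ x in A k, (‖h x‖₊ : ENNReal) ∂volume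
          = ∫⁻ x in A 0, (‖h x‖₊ : ENNReal) ∂volume := keyall
      rw [tsum_congr this]
      exact ENNReal.tsum_const_eq_top_of_ne_zero hc
    exact absurd this (ne_of_lt hint.2)
  have hzero : ∫⁻ x, (‖h x‖₊ : ENNReal) ∂volume = 0 := by
    rw [htot, tsum_congr keyall, hc0]; simp
  have := (lintegral_eq_zero_iff hm.nnnorm.coe_nnreal_ennreal).mp hzero
  filter_upwards [this] with x hx
  simpa using hx

private lemma exists_ortho {n : ℕ} (hn : 2 ≤ n) (w : Fin n → ℝ) :
    ∃ v : Fin n → ℝ, v ≠ 0 ∧ ∑ j, w j * v j = 0 := by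
  obtain ⟨k, rfl⟩ : ∃ k, n = k + 2 := ⟨n - 2, by omega⟩
  have h01 : (0 : Fin (k + 2)) ≠ 1 := Fin.zero_ne_one
  have hsum : ∀ (p q : ℝ),
      ∑ j : Fin (k + 2), w j * (if j = 0 then p else if j = 1 then q else 0)
        = w 0 * p + w 1 * q := by
    intro p q
    have h : ∀ j : Fin (k + 2), w j * (if j = 0 then p else if j = 1 then q else 0)
        = (if j = 0 then w j * p else 0) + (if j = 1 then w j * q else 0) := by
      intro j
      by_cases hj0 : j = 0
      · subst hj0
        rw [if_pos rfl, if_pos rfl, if_neg h01, add_zero]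
      · by_cases hj1 : j = 1 <;> simp [hj0, hj1]
    rw [Finset.sum_congr rfl fun j _ => h j, Finset.sum_add_distrib,
      Finset.sum_ite_eq' Finset.univ (0 : Fin (k + 2)) (fun j => w j * p),
      Finset.sum_ite_eq' Finset.univ (1 : Fin (k + 2)) (fun j => w j * q)]
    simp
  by_cases hw : w 0 = 0 ∧ w 1 = 0
  · refine ⟨fun j => if j = 0 then (1 : ℝ) else if j = 1 then 0 else 0, ?_, ?_⟩
    · intro hc
      have := congrFun hc 0
      rw [if_pos rfl] at this
      simp at this
    · rw [hsum 1 0, hw.1, hw.2]; ring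
  · refine ⟨fun j => if j = 0 then w 1 else if j = 1 then -(w 0) else 0, ?_, ?_⟩
    · intro hc
      rw [not_and_or] at hw
      rcases hw with hw | hw
      · have := congrFun hc 1
        rw [if_neg (Ne.symm h01), if_pos rfl] at this
        simp at this
        exact hw (by linarith)
      · have := congrFun hc 0
        rw [if_pos rfl] at this
        exact hw this
    · rw [hsum (w 1) (-(w 0))]; ring

private lemma ridge_sum_zero {n : ℕ} (hn : 2 ≤ n) :
    ∀ (m : ℕ) (φ : Fin m → ℝ → ℝ), (∀ i, Measurable (φ i)) → ∀ (w : Fin m → Fin n → ℝ),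
    Integrable (fun x : Fin n → ℝ => ∑ i, φ i (∑ j, w i j * x j)) volume →
    ∀ᵐ x : Fin n → ℝ, ∑ i, φ i (∑ j, w i j * x j) = 0 := by
  intro m
  induction m with
  | zero => intro φ hφ w hint; simp
  | succ m ih =>
    intro φ hφ w hint
    obtain ⟨v, hv0, hvw⟩ := exists_ortho hn (w (Fin.last m))
    set g : (Fin n → ℝ) → ℝ := fun x => ∑ i, φ i (∑ j, w i j * x j) with hg
    have hinner : ∀ (i : Fin (m + 1)), Measurable fun x : Fin n → ℝ => ∑ j, w i j * x j := by
      intro i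
      exact Finset.measurable_sum _ fun j _ => (measurable_pi_apply j).const_mul _
    have hgm : Measurable g :=
      Finset.measurable_sum _ fun i _ => (hφ i).comp (hinner i)
    set c : Fin m → ℝ := fun i => ∑ j, w i.castSucc j * v j with hc
    set ψ : Fin m → ℝ → ℝ := fun i t => φ i.castSucc (t + c i) - φ i.castSucc t with hψdef
    have hψ : ∀ i, Measurable (ψ i) := fun i =>
      ((hφ _).comp (measurable_id.add_const _)).sub (hφ _)
    have hsum_shift : ∀ (i : Fin (m + 1)) (x : Fin n → ℝ),
        ∑ j, w i j * (x + v) j = (∑ j, w i j * x j) + ∑ j, w i j * v j := by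
      intro i x
      rw [← Finset.sum_add_distrib]
      exact Finset.sum_congr rfl fun j _ => by simp [Pi.add_apply]; ring
    have hkey : ∀ x : Fin n → ℝ,
        g (x + v) - g x = ∑ i : Fin m, ψ i (∑ j, w i.castSucc j * x j) := by
      intro x
      simp only [hg, Fin.sum_univ_castSucc, hsum_shift, hvw, add_zero, hψdef, hc]
      rw [Finset.sum_sub_distrib]
      ring
    have htrans : Integrable (fun x : Fin n → ℝ => g (x + v)) volume := by
      have hmp : MeasurePreserving (fun x : Fin n → ℝ => x + v) volume volume :=
        measurePreserving_add_right volume v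
      exact (hmp.integrable_comp hint.aestronglyMeasurable).mpr hint
    have hint2 : Integrable (fun x : Fin n → ℝ =>
        ∑ i : Fin m, ψ i (∑ j, w i.castSucc j * x j)) volume := by
      refine (htrans.sub hint).congr (Filter.Eventually.of_forall fun x => hkey x)
    have hae := ih ψ hψ (fun i => w i.castSucc) hint2
    have htr : ∀ᵐ x : Fin n → ℝ, g (x + v) = g x := by
      filter_upwards [hae] with x hx
      have := hkey x
      rw [hx] at this
      linarith
    exact translate_ae_eq_zero v hv0 g hgm hint htr

theorem stmt_11 (n m : ℕ) (hn : 2 ≤ n) (f : (Fin n → ℝ) → ℝ)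
    (hf : Integrable f (volume : Measure (Fin n → ℝ)))
    (σ : Fin m → ℝ → ℝ) (hσ : ∀ i, Measurable (σ i))
    (a : Fin m → ℝ) (w : Fin m → Fin n → ℝ) (b : Fin m → ℝ) :
    (∫⁻ x : Fin n → ℝ, ENNReal.ofReal |f x - ∑ i, a i * σ i (∑ j, w i j * x j + b i)| = ⊤) ∨
    (∫⁻ x : Fin n → ℝ, ENNReal.ofReal |f x - ∑ i, a i * σ i (∑ j, w i j * x j + b i)|
      = ∫⁻ x : Fin n → ℝ, ENNReal.ofReal |f x|) := by
  set F : (Fin n → ℝ) → ℝ := fun x => ∑ i, a i * σ i (∑ j, w i j * x j + b i) with hF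
  by_cases htop : (∫⁻ x : Fin n → ℝ, ENNReal.ofReal |f x - F x|) = ⊤
  · left; exact htop
  right
  set φ : Fin m → ℝ → ℝ := fun i t => a i * σ i (t + b i) with hφdef
  have hφ : ∀ i, Measurable (φ i) := fun i =>
    ((hσ i).comp (measurable_id.add_const _)).const_mul _
  have hFeq : ∀ x, F x = ∑ i, φ i (∑ j, w i j * x j) := fun x => rfl
  have hFm : Measurable F := by
    refine Finset.measurable_sum _ fun i _ => ?_
    exact ((hσ i).comp ((Finset.measurable_sum _ fun j _ =>
      (measurable_pi_apply j).const_mul _).add_const _)).const_mul _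
  have habs : ∀ (G : (Fin n → ℝ) → ℝ),
      (∫⁻ x : Fin n → ℝ, ENNReal.ofReal |G x|) = ∫⁻ x, (‖G x‖₊ : ENNReal) := by
    intro G
    refine lintegral_congr fun x => ?_
    rw [← Real.enorm_eq_ofReal_abs]; rfl
  have hsub : Integrable (fun x => f x - F x) volume := by
    refine ⟨hf.aestronglyMeasurable.sub hFm.aestronglyMeasurable, ?_⟩
    show (∫⁻ x, (‖f x - F x‖₊ : ENNReal) ∂volume) < ⊤
    rw [← habs fun x => f x - F x]
    exact lt_top_iff_ne_top.mpr htop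
  have hgint : Integrable F volume := by
    have := hf.sub hsub
    refine this.congr (Filter.Eventually.of_forall fun x => ?_)
    simp
  have hFzero : ∀ᵐ x : Fin n → ℝ, F x = 0 := by
    have := ridge_sum_zero hn m φ hφ w
      (hgint.congr (Filter.Eventually.of_forall fun x => hFeq x))
    filter_upwards [this] with x hx
    rw [hFeq x, hx]
  refine lintegral_congr_ae ?_
  filter_upwards [hFzero] with x hx
  have hx' : (∑ i : Fin m, a i * σ i (∑ j : Fin n, w i j * x j + b i)) = 0 := hx
  rw [hx', sub_zero]
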